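/- Let H be an additive subgroup of G and let ψ_H : G → ℂ be the normalized indicator vector of H, i.e. ψ_H(g) = 1/√|H| if g ∈ H and ψ_H(g) = 0 otherwise. Then the matrix–vector product F.mulVec ψ_H equals the vector that takes the value √(|H|/𝔤) on every element of H^⊥ and the value 0 on every element outside H^⊥. -/

import Mathlib

open scoped Classical

/-- The character `χ_g` of the finite abelian group `G = ∀ i, ZMod (d i)`. -/
noncomputable def chi {m : ℕ} {d : Fin m → ℕ} (g h : ∀ i, ZMod (d i)) : ℂ :=
  Complex.exp (2 * Real.pi * Complex.I *
    ∑ i, ((g i).val : ℂ) * ((h i).val : ℂ) / ((d i : ℕ) : ℂ))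

lemma chi_add {m : ℕ} {d : Fin m → ℕ} [∀ i, NeZero (d i)] (g a b : ∀ i, ZMod (d i)) :
    chi g (a + b) = chi g a * chi g b := by
  rw [chi, chi, chi, ← Complex.exp_add, ← mul_add]
  have hexp : ∀ n : ℕ, Complex.exp (2 * (Real.pi : ℂ) * Complex.I * (n : ℂ)) = 1 := by
    intro n
    rw [mul_comm, Complex.exp_nat_mul, Complex.exp_two_pi_mul_I, one_pow]
  have term : ∀ i : Fin m, ((g i).val : ℂ) * ((a i).val : ℂ) / ((d i : ℕ) : ℂ)
      + ((g i).val : ℂ) * ((b i).val : ℂ) / ((d i : ℕ) : ℂ)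
      = ((g i).val : ℂ) * (((a + b) i).val : ℂ) / ((d i : ℕ) : ℂ)
        + (((g i).val * (((a i).val + (b i).val) / d i) : ℕ) : ℂ) := by
    intro i
    have hd : ((d i : ℕ) : ℂ) ≠ 0 := Nat.cast_ne_zero.mpr (NeZero.ne _)
    have hval : (((a + b) i).val : ℂ) + ((d i : ℕ) : ℂ) * ((((a i).val + (b i).val) / d i : ℕ) : ℂ)
        = ((a i).val : ℂ) + ((b i).val : ℂ) := by
      have h2 : ((a + b) i).val + d i * (((a i).val + (b i).val) / d i)
          = (a i).val + (b i).val := by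
        have h1 : ((a + b) i).val = ((a i).val + (b i).val) % d i := by
          simpa using ZMod.val_add (a i) (b i)
        rw [h1, Nat.mod_add_div]
      exact_mod_cast congrArg (Nat.cast : ℕ → ℂ) h2
    rw [Nat.cast_mul, ← add_div, div_add' _ _ _ hd, div_eq_div_iff hd hd]
    linear_combination (-1 : ℂ) * ((g i).val : ℂ) * ((d i : ℕ) : ℂ) * hval
  have key : ∑ i, ((g i).val : ℂ) * ((a i).val : ℂ) / ((d i : ℕ) : ℂ)
      + ∑ i, ((g i).val : ℂ) * ((b i).val : ℂ) / ((d i : ℕ) : ℂ)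
      = ∑ i, ((g i).val : ℂ) * (((a + b) i).val : ℂ) / ((d i : ℕ) : ℂ)
        + ((∑ i, (g i).val * (((a i).val + (b i).val) / d i) : ℕ) : ℂ) := by
    rw [← Finset.sum_add_distrib, Nat.cast_sum, ← Finset.sum_add_distrib]
    exact Finset.sum_congr rfl fun i _ => term i
  rw [key, mul_add, Complex.exp_add, hexp, mul_one]

lemma chi_zero {m : ℕ} {d : Fin m → ℕ} [∀ i, NeZero (d i)] (g : ∀ i, ZMod (d i)) :
    chi g 0 = 1 := by
  simp [chi]

lemma sum_chi_eq_zero {m : ℕ} {d : Fin m → ℕ} [∀ i, NeZero (d i)]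
    (H : AddSubgroup (∀ i, ZMod (d i))) (g : ∀ i, ZMod (d i))
    (hne : ¬ ∀ h ∈ H, chi g h = 1) : ∑ h : H, chi g (h : ∀ i, ZMod (d i)) = 0 := by
  push_neg at hne
  obtain ⟨h0, hh0, hne⟩ := hne
  have key : chi g h0 * ∑ h : H, chi g (h : ∀ i, ZMod (d i))
      = ∑ h : H, chi g (h : ∀ i, ZMod (d i)) := by
    rw [Finset.mul_sum]
    exact Fintype.sum_equiv (Equiv.addLeft (⟨h0, hh0⟩ : H)) _ _ (fun h => by
      rw [← chi_add]; rfl)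
  have h2 : (chi g h0 - 1) * ∑ h : H, chi g (h : ∀ i, ZMod (d i)) = 0 := by
    rw [sub_mul, one_mul, key, sub_self]
  rcases mul_eq_zero.mp h2 with h | h
  · exact absurd (by linear_combination h) hne
  · exact h

/-- The Fourier transform of the normalized indicator vector of a subgroup `H` is the
vector with value `√(|H|/𝔤)` on `H^⊥` and `0` elsewhere. -/
theorem stmt_2 (m : ℕ) (hm : 0 < m) (d : Fin m → ℕ) [∀ i, NeZero (d i)]
    (H : AddSubgroup (∀ i, ZMod (d i)))
    (F : Matrix (∀ i, ZMod (d i)) (∀ i, ZMod (d i)) ℂ)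
    (hF : ∀ g h, F g h = chi g h / Real.sqrt (Fintype.card (∀ i, ZMod (d i))))
    (ψ : (∀ i, ZMod (d i)) → ℂ)
    (hψ : ∀ g, ψ g = if g ∈ H then (1 / (Real.sqrt (Nat.card H) : ℂ)) else 0) :
    F.mulVec ψ = fun g =>
      if g ∈ {x : ∀ i, ZMod (d i) | ∀ h ∈ H, chi x h = 1} then
        ((Real.sqrt ((Nat.card H : ℝ) / (Fintype.card (∀ i, ZMod (d i)) : ℝ)) : ℝ) : ℂ)
      else 0 := by
  set G := ∀ i, ZMod (d i)
  set 𝔤 : ℕ := Fintype.card G with h𝔤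
  have hHcard : Nat.card H = Fintype.card H := Nat.card_eq_fintype_card
  have hHpos : 0 < Fintype.card H := Fintype.card_pos
  have h𝔤pos : 0 < 𝔤 := Fintype.card_pos
  have conv : ∀ f : G → ℂ, (∑ h, if h ∈ H then f h else 0) = ∑ h : H, f (h : G) := by
    intro f
    rw [← Finset.sum_filter]
    exact Finset.sum_subtype _ (fun x => by simp) f
  funext g
  simp only [Matrix.mulVec, dotProduct, hF, hψ, mul_ite, mul_zero, Set.mem_setOf_eq]
  rw [conv (fun h => chi g h / (Real.sqrt 𝔤 : ℂ) * (1 / (Real.sqrt (Nat.card H) : ℂ)))]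
  by_cases hg : ∀ h ∈ H, chi g h = 1
  · rw [if_pos hg]
    have : ∀ h : H, chi g (h : G) / (Real.sqrt 𝔤 : ℂ) * (1 / (Real.sqrt (Nat.card H) : ℂ))
        = 1 / (Real.sqrt 𝔤 : ℂ) * (1 / (Real.sqrt (Nat.card H) : ℂ)) := by
      intro h; rw [hg _ h.2]
    rw [Finset.sum_congr rfl (fun h _ => this h), Finset.sum_const, Finset.card_univ,
      nsmul_eq_mul, ← hHcard]
    have hreal : (Nat.card H : ℝ) * (1 / Real.sqrt 𝔤 * (1 / Real.sqrt (Nat.card H)))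
        = Real.sqrt ((Nat.card H : ℝ) / (𝔤 : ℝ)) := by
      rw [Real.sqrt_div (by positivity)]
      have h1 : (Nat.card H : ℝ) = Real.sqrt (Nat.card H) * Real.sqrt (Nat.card H) :=
        (Real.mul_self_sqrt (by positivity)).symm
      have h2 : Real.sqrt (Nat.card H : ℝ) ≠ 0 := by
        rw [hHcard]; positivity
      have h3 : Real.sqrt (𝔤 : ℝ) ≠ 0 := by positivity
      field_simp
      rw [hHcard] at h1
      linear_combination (-1 : ℝ) * Real.mul_self_sqrt (Nat.cast_nonneg (α := ℝ) (Nat.card H))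
    exact_mod_cast congrArg (Complex.ofReal) hreal
  · rw [if_neg hg]
    have := sum_chi_eq_zero H g hg
    rw [show (fun h : H => chi g (h : G) / (Real.sqrt 𝔤 : ℂ) * (1 / (Real.sqrt (Nat.card H) : ℂ)))
        = fun h : H => chi g (h : G) * (1 / (Real.sqrt 𝔤 : ℂ) * (1 / (Real.sqrt (Nat.card H) : ℂ)))
      from funext fun h => by ring, ← Finset.sum_mul, this, zero_mul]
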